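/- For every real number x, with G(x) = sin(π(i−x))/sin(π(i+x)), the series ∑_{n ≥ 0} (−1)^n · e^{−2nπ} · G(x)^{n+1} converges absolutely and e^{2iπx} = e^{−2π} + (1 − e^{−4π}) · ∑_{n ≥ 0} (−1)^n · e^{−2nπ} · G(x)^{n+1}. -/

import Mathlib

open Complex Real

private lemma one_sub_ne_zero_of_norm_lt_one {z : ℂ} (hz : ‖z‖ < 1) : (1 : ℂ) - z ≠ 0 := by
  intro h
  rw [sub_eq_zero] at h
  rw [← h] at hz
  simp at hz

/-- The explicit phase-unwinding series of `e^{2iπx}`: for real `x`, with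
`G(x) = sin(π(i−x))/sin(π(i+x))`, the series `∑_{n≥0} (−1)^n e^{−2nπ} G(x)^{n+1}` converges
absolutely and `e^{2iπx} = e^{−2π} + (1 − e^{−4π})·∑_{n≥0} (−1)^n e^{−2nπ} G(x)^{n+1}`. -/
theorem exp_unwinding_series (G : ℝ → ℂ)
    (hG : ∀ x : ℝ,
      G x = Complex.sin ((π : ℂ) * (I - (x : ℂ))) / Complex.sin ((π : ℂ) * (I + (x : ℂ))))
    (x : ℝ) :
    Summable (fun n : ℕ =>
      ‖(-1 : ℂ) ^ n * Complex.exp (-2 * (n : ℂ) * (π : ℂ)) * G x ^ (n + 1)‖) ∧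
    Complex.exp (2 * I * (π : ℂ) * (x : ℂ)) =
      Complex.exp (-2 * (π : ℂ)) + (1 - Complex.exp (-4 * (π : ℂ))) *
        ∑' n : ℕ, (-1 : ℂ) ^ n * Complex.exp (-2 * (n : ℂ) * (π : ℂ)) * G x ^ (n + 1) := by
  set q : ℂ := Complex.exp (-2 * (π : ℂ)) with hq
  set w : ℂ := Complex.exp (2 * I * (π : ℂ) * (x : ℂ)) with hw
  set p : ℂ := Complex.exp (-(π : ℂ)) with hp
  set u : ℂ := Complex.exp (I * (π : ℂ) * (x : ℂ)) with hu
  have hpne : p ≠ 0 := Complex.exp_ne_zero _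
  have hune : u ≠ 0 := Complex.exp_ne_zero _
  have hqp : q = p ^ 2 := by
    rw [hq, hp, sq, ← Complex.exp_add]; congr 1; ring
  have hwu : w = u ^ 2 := by
    rw [hw, hu, sq, ← Complex.exp_add]; congr 1; ring
  have hpnorm : ‖p‖ = Real.exp (-π) := by
    rw [hp, Complex.norm_exp]
    norm_num
  have hunorm : ‖u‖ = 1 := by
    have : u = Complex.exp (((π * x : ℝ) : ℂ) * I) := by
      rw [hu]; congr 1; push_cast; ring
    rw [this, Complex.norm_exp_ofReal_mul_I]
  have hqnorm : ‖q‖ = Real.exp (-(2 * π)) := by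
    rw [hqp, norm_pow, hpnorm, sq, ← Real.exp_add]; ring_nf
  have hwnorm : ‖w‖ = 1 := by
    rw [hwu, norm_pow, hunorm, one_pow]
  have hqlt : ‖q‖ < 1 := by
    rw [hqnorm]
    exact Real.exp_lt_one_iff.2 (by nlinarith [Real.pi_pos])
  have hpinv : Complex.exp ((π : ℂ)) = p⁻¹ := by
    rw [hp, ← Complex.exp_neg, neg_neg]
  have huinv : Complex.exp (-(I * (π : ℂ) * (x : ℂ))) = u⁻¹ := by
    rw [Complex.exp_neg, ← hu]
  -- the two sines in exponential form
  have hsin1 : Complex.sin ((π : ℂ) * (I - (x : ℂ))) = (u / p - p / u) * I / 2 := by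
    rw [Complex.sin]
    have e1 : -((π : ℂ) * (I - (x : ℂ))) * I = (π : ℂ) + I * (π : ℂ) * (x : ℂ) := by
      linear_combination (-(π : ℂ)) * Complex.I_mul_I
    have e2 : ((π : ℂ) * (I - (x : ℂ))) * I = -(π : ℂ) + -(I * (π : ℂ) * (x : ℂ)) := by
      linear_combination (π : ℂ) * Complex.I_mul_I
    rw [e1, e2, Complex.exp_add, Complex.exp_add, hpinv, huinv, ← hp, ← hu]
    field_simp
  have hsin2 : Complex.sin ((π : ℂ) * (I + (x : ℂ))) = (1 / (p * u) - p * u) * I / 2 := by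
    rw [Complex.sin]
    have e1 : -((π : ℂ) * (I + (x : ℂ))) * I = (π : ℂ) + -(I * (π : ℂ) * (x : ℂ)) := by
      linear_combination (-(π : ℂ)) * Complex.I_mul_I
    have e2 : ((π : ℂ) * (I + (x : ℂ))) * I = -(π : ℂ) + I * (π : ℂ) * (x : ℂ) := by
      linear_combination (π : ℂ) * Complex.I_mul_I
    rw [e1, e2, Complex.exp_add, Complex.exp_add, hpinv, huinv, ← hp, ← hu]
    field_simp
  have hqwne : (1 : ℂ) - q * w ≠ 0 := by
    apply one_sub_ne_zero_of_norm_lt_one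
    rw [norm_mul, hwnorm, mul_one]; exact hqlt
  have hq2ne : (1 : ℂ) - q ^ 2 ≠ 0 := by
    apply one_sub_ne_zero_of_norm_lt_one
    rw [norm_pow]
    calc ‖q‖ ^ 2 ≤ ‖q‖ := by nlinarith [norm_nonneg q]
    _ < 1 := hqlt
  have hpune : p * u ≠ 0 := mul_ne_zero hpne hune
  have hsin2ne : ((1 : ℂ) / (p * u) - p * u) * I / 2 ≠ 0 := by
    have hpu : ‖p * u‖ < 1 := by
      rw [norm_mul, hunorm, mul_one, hpnorm]
      exact Real.exp_lt_one_iff.2 (by nlinarith [Real.pi_pos])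
    have h1 : (1 : ℂ) - (p * u) ^ 2 ≠ 0 := by
      apply one_sub_ne_zero_of_norm_lt_one
      rw [norm_pow]
      calc ‖p * u‖ ^ 2 ≤ ‖p * u‖ := by nlinarith [norm_nonneg (p * u)]
      _ < 1 := hpu
    intro h
    apply h1
    field_simp [Complex.I_ne_zero] at h
    linear_combination (-I) * h + (1 - (p * u) ^ 2) * Complex.I_mul_I
  -- G in Blaschke form
  have hGxw : G x = (w - q) / (1 - q * w) := by
    rw [hG x, hsin1, hsin2, hqp, hwu,
      div_eq_div_iff hsin2ne (by rw [← hqp, ← hwu]; exact hqwne)]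
    field_simp
  -- |G x| = 1
  have hGnorm : ‖G x‖ = 1 := by
    have hwI : w = Complex.exp (((2 * π * x : ℝ) : ℂ) * I) := by
      rw [hw]; congr 1; push_cast; ring
    have hconjw : (starRingEnd ℂ) w = w⁻¹ := by
      rw [hwI, ← Complex.exp_conj, map_mul, Complex.conj_ofReal, Complex.conj_I,
        ← Complex.exp_neg]
      congr 1; ring
    have hconjq : (starRingEnd ℂ) q = q := by
      rw [hq, show (-2 * (π : ℂ)) = ((-(2 * π) : ℝ) : ℂ) by push_cast; ring,
        ← Complex.exp_conj, Complex.conj_ofReal]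
    have hwne : w ≠ 0 := Complex.exp_ne_zero _
    have key : ‖(1 : ℂ) - q * w‖ = ‖w - q‖ := by
      have hc : (starRingEnd ℂ) ((1 : ℂ) - q * w) = (w - q) / w := by
        rw [map_sub, map_mul, hconjq, hconjw, map_one]
        field_simp
      calc ‖(1 : ℂ) - q * w‖ = ‖(starRingEnd ℂ) ((1 : ℂ) - q * w)‖ := by
            rw [Complex.norm_conj]
      _ = ‖w - q‖ / ‖w‖ := by rw [hc, norm_div]
      _ = ‖w - q‖ := by rw [hwnorm, div_one]
    rw [hGxw, norm_div, key]
    exact div_self (key ▸ norm_ne_zero_iff.2 hqwne)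
  set r : ℂ := -(q * G x) with hr
  have hrnorm : ‖r‖ < 1 := by
    rw [hr, norm_neg, norm_mul, hGnorm, mul_one]; exact hqlt
  have hterm : ∀ n : ℕ, (-1 : ℂ) ^ n * Complex.exp (-2 * (n : ℂ) * (π : ℂ)) * G x ^ (n + 1)
      = G x * r ^ n := by
    intro n
    have h2 : (-2 : ℂ) * (n : ℂ) * (π : ℂ) = (n : ℂ) * (-2 * (π : ℂ)) := by ring
    rw [h2, Complex.exp_nat_mul, ← hq, hr, neg_pow (q * G x) n, mul_pow, pow_succ]
    ring
  constructor
  · have hs : Summable (fun n : ℕ => ‖G x‖ * ‖r‖ ^ n) :=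
      (summable_geometric_of_lt_one (norm_nonneg r) hrnorm).mul_left _
    refine hs.congr fun n => ?_
    rw [hterm n, norm_mul, norm_pow]
  · have htsum : (∑' n : ℕ, (-1 : ℂ) ^ n * Complex.exp (-2 * (n : ℂ) * (π : ℂ)) * G x ^ (n + 1))
        = G x * (1 - r)⁻¹ := by
      rw [tsum_congr hterm, tsum_mul_left, tsum_geometric_of_norm_lt_one hrnorm]
    have hq4 : Complex.exp (-4 * (π : ℂ)) = q ^ 2 := by
      rw [hq, sq, ← Complex.exp_add]; congr 1; ring
    rw [htsum, hq4]
    have h1r : 1 - r = (1 - q ^ 2) / (1 - q * w) := by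
      rw [hr, hGxw]
      field_simp
      ring
    rw [h1r, hGxw]
    field_simp
    rw [mul_div_assoc, div_self (by rw [mul_comm w q]; exact hqwne)]
    ring
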